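/- Let H be a Hopf algebra and ⇀, ↼ a left and a right H-module coalgebra action of H on itself such that xy = (x₁ ⇀ y₁)(x₂ ↼ y₂) and (x₁ ⇀ y₁) ⊗ (x₂ ↼ y₂) = (x₂ ⇀ y₂) ⊗ (x₁ ↼ y₁) for all x, y ∈ H. Then x ⇀ 1 = ε(x)1 and 1 ↼ y = ε(y)1 for all x, y ∈ H. -/

import Mathlib

open TensorProduct Coalgebra HopfAlgebra LinearMap

/-- The bundled representation `Coalgebra.Repr` of the older Mathlib (index type bundled). -/
structure CoalgRepr.{u, v} (R : Type u) {A : Type v}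
    [CommSemiring R] [AddCommMonoid A] [Module R A] [CoalgebraStruct R A] (a : A) where
  {ι : Type v}
  (index : Finset ι)
  (left : ι → A)
  (right : ι → A)
  (eq : ∑ i ∈ index, left i ⊗ₜ[R] right i = CoalgebraStruct.comul a)

noncomputable section

variable (k H : Type*) [CommRing k] [Ring H] [HopfAlgebra k H]

/-- `f` is a left `H`-module coalgebra action of the Hopf algebra `H` on itself. -/
structure IsLeftModCoalgAction (f : H ⊗[k] H →ₗ[k] H) : Prop where
  one_act : ∀ a : H, f (1 ⊗ₜ a) = a
  mul_act : ∀ x y a : H, f ((x * y) ⊗ₜ a) = f (x ⊗ₜ f (y ⊗ₜ a))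
  counit_act : ∀ x a : H, counit (R := k) (f (x ⊗ₜ a)) = counit (R := k) x * counit (R := k) a
  comul_act : ∀ (x a : H) (rx : CoalgRepr k x) (ra : CoalgRepr k a),
      comul (R := k) (f (x ⊗ₜ a)) =
        ∑ i ∈ rx.index, ∑ j ∈ ra.index,
          f (rx.left i ⊗ₜ ra.left j) ⊗ₜ[k] f (rx.right i ⊗ₜ ra.right j)

/-- `g` is a right `H`-module coalgebra action of the Hopf algebra `H` on itself. -/
structure IsRightModCoalgAction (g : H ⊗[k] H →ₗ[k] H) : Prop where
  act_one : ∀ x : H, g (x ⊗ₜ 1) = x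
  act_mul : ∀ x a b : H, g (x ⊗ₜ (a * b)) = g (g (x ⊗ₜ a) ⊗ₜ b)
  counit_act : ∀ x a : H, counit (R := k) (g (x ⊗ₜ a)) = counit (R := k) x * counit (R := k) a
  comul_act : ∀ (x a : H) (rx : CoalgRepr k x) (ra : CoalgRepr k a),
      comul (R := k) (g (x ⊗ₜ a)) =
        ∑ i ∈ rx.index, ∑ j ∈ ra.index,
          g (rx.left i ⊗ₜ ra.left j) ⊗ₜ[k] g (rx.right i ⊗ₜ ra.right j)

/-- `(H, f, g)` (written `(H, ⇀, ↼)`) is a matched pair of actions on the Hopf algebra `H`: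
`f` is a left module coalgebra action, `g` a right module coalgebra action, satisfying the
matched pair conditions (MP1)–(MP5) and the extra condition `xy = (x₁ ⇀ y₁)(x₂ ↼ y₂)`. -/
structure IsMatchedPairOfActions (f g : H ⊗[k] H →ₗ[k] H) : Prop where
  left_action : IsLeftModCoalgAction k H f
  right_action : IsRightModCoalgAction k H g
  mp1 : ∀ (x a b : H) (rx : CoalgRepr k x) (ra : CoalgRepr k a),
      f (x ⊗ₜ (a * b)) =
        ∑ i ∈ rx.index, ∑ j ∈ ra.index,
          f (rx.left i ⊗ₜ ra.left j) * f (g (rx.right i ⊗ₜ ra.right j) ⊗ₜ b)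
  mp2 : ∀ x : H, f (x ⊗ₜ 1) = counit (R := k) x • (1 : H)
  mp3 : ∀ (x y a : H) (ry : CoalgRepr k y) (ra : CoalgRepr k a),
      g ((x * y) ⊗ₜ a) =
        ∑ i ∈ ry.index, ∑ j ∈ ra.index,
          g (x ⊗ₜ f (ry.left i ⊗ₜ ra.left j)) * g (ry.right i ⊗ₜ ra.right j)
  mp4 : ∀ a : H, g ((1 : H) ⊗ₜ a) = counit (R := k) a • (1 : H)
  mp5 : ∀ (x a : H) (rx : CoalgRepr k x) (ra : CoalgRepr k a),
      (∑ i ∈ rx.index, ∑ j ∈ ra.index,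
        f (rx.left i ⊗ₜ ra.left j) ⊗ₜ[k] g (rx.right i ⊗ₜ ra.right j)) =
      ∑ i ∈ rx.index, ∑ j ∈ ra.index,
        f (rx.right i ⊗ₜ ra.right j) ⊗ₜ[k] g (rx.left i ⊗ₜ ra.left j)
  mp_mul : ∀ (x y : H) (rx : CoalgRepr k x) (ry : CoalgRepr k y),
      x * y = ∑ i ∈ rx.index, ∑ j ∈ ry.index,
        f (rx.left i ⊗ₜ ry.left j) * g (rx.right i ⊗ₜ ry.right j)

/-- The braiding operator `r(x ⊗ y) = (x₁ ⇀ y₁) ⊗ (x₂ ↼ y₂)` associated to the pair `(f, g)`. -/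
def braidOp (f g : H ⊗[k] H →ₗ[k] H) : H ⊗[k] H →ₗ[k] H ⊗[k] H :=
  TensorProduct.map f g ∘ₗ (tensorTensorTensorComm k H H H H).toLinearMap
    ∘ₗ TensorProduct.map (comul (R := k)) (comul (R := k))



/-- View a bundled representation as Mathlib's `Coalgebra.Repr`. -/
abbrev CoalgRepr.toRepr {R A : Type*} [CommRing R] [Ring A] [HopfAlgebra R A] {a : A}
    (r : CoalgRepr R a) : Coalgebra.Repr R a r.ι :=
  ⟨r.index, r.left, r.right, r.eq⟩

/-- Bundle a Mathlib `Coalgebra.Repr`. -/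
abbrev CoalgRepr.ofRepr {R A : Type*} [CommRing R] [Ring A] [HopfAlgebra R A] {a : A}
    (r : Coalgebra.Repr R a (A × A)) : CoalgRepr R a :=
  ⟨r.index, r.left, r.right, r.eq⟩



/-- The canonical one-term representation of `comul 1 = 1 ⊗ 1`, universe polymorphic. -/
def oneRepr : CoalgRepr k (1 : H) where
  ι := PUnit
  index := Finset.univ
  left _ := 1
  right _ := 1
  eq := by simp [Bialgebra.comul_one, Algebra.TensorProduct.one_def]

/-- A universe-polymorphic version of the arbitrarily chosen representation. -/
def uliftRepr (a : H) : CoalgRepr k a :=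
  let r := Coalgebra.Repr.arbitrary k a
  { ι := ULift (Fin r.index.card)
    index := Finset.univ
    left := fun i => r.left (r.index.equivFin.symm i.down)
    right := fun i => r.right (r.index.equivFin.symm i.down)
    eq := by
      rw [← r.eq, ← Finset.sum_coe_sort r.index (fun i => r.left i ⊗ₜ[k] r.right i)]
      exact Fintype.sum_equiv (Equiv.ulift.trans r.index.equivFin.symm) _ _ (fun i => rfl) }

lemma sum_counit_smul_left {a : H} (r : CoalgRepr k a) :
    ∑ i ∈ r.index, counit (R := k) (r.right i) • r.left i = a := by
  have h := Coalgebra.sum_tmul_counit_eq (R := k) r.toRepr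
  apply_fun (TensorProduct.rid k H) at h
  simp only [map_sum, TensorProduct.rid_tmul, one_smul] at h
  exact h

lemma sum_counit_smul_right {a : H} (r : CoalgRepr k a) :
    ∑ i ∈ r.index, counit (R := k) (r.left i) • r.right i = a := by
  have h := Coalgebra.sum_counit_tmul_eq (R := k) r.toRepr
  apply_fun (TensorProduct.lid k H) at h
  simp only [map_sum, TensorProduct.lid_tmul, one_smul] at h
  exact h

/-- If `⇀` and `↼` are a left and a right `H`-module coalgebra action of `H`
on itself with `xy = (x₁ ⇀ y₁)(x₂ ↼ y₂)` and
`(x₁ ⇀ y₁) ⊗ (x₂ ↼ y₂) = (x₂ ⇀ y₂) ⊗ (x₁ ↼ y₁)`, then `x ⇀ 1 = ε(x)1` and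
`1 ↼ y = ε(y)1`. -/
theorem stmt18 (f g : H ⊗[k] H →ₗ[k] H)
    (hf : IsLeftModCoalgAction k H f) (hg : IsRightModCoalgAction k H g)
    (hmul : ∀ (x y : H) (rx : CoalgRepr k x) (ry : CoalgRepr k y),
      x * y = ∑ i ∈ rx.index, ∑ j ∈ ry.index,
        f (rx.left i ⊗ₜ ry.left j) * g (rx.right i ⊗ₜ ry.right j))
    (hsym : ∀ (x y : H) (rx : CoalgRepr k x) (ry : CoalgRepr k y),
      (∑ i ∈ rx.index, ∑ j ∈ ry.index,
        f (rx.left i ⊗ₜ ry.left j) ⊗ₜ[k] g (rx.right i ⊗ₜ ry.right j)) =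
      ∑ i ∈ rx.index, ∑ j ∈ ry.index,
        f (rx.right i ⊗ₜ ry.right j) ⊗ₜ[k] g (rx.left i ⊗ₜ ry.left j)) :
    (∀ x : H, f (x ⊗ₜ 1) = counit (R := k) x • (1 : H)) ∧
    ∀ y : H, g ((1 : H) ⊗ₜ y) = counit (R := k) y • (1 : H) := by
  set φ : H →ₗ[k] H := f ∘ₗ (TensorProduct.mk k H H).flip 1 with hφ
  set ψ : H →ₗ[k] H := g ∘ₗ TensorProduct.mk k H H 1 with hψ
  have hφa : ∀ a : H, φ a = f (a ⊗ₜ 1) := fun a => rfl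
  have hψa : ∀ a : H, ψ a = g ((1 : H) ⊗ₜ a) := fun a => rfl
  have hB : ∀ (a : H) (r : CoalgRepr k a),
      a = ∑ i ∈ r.index, φ (r.left i) * r.right i := by
    intro a r
    have h := hmul a 1 r (oneRepr k H)
    simpa [oneRepr, hg.act_one, hφa] using h
  have hB' : ∀ (a : H) (r : CoalgRepr k a),
      a = ∑ i ∈ r.index, r.left i * ψ (r.right i) := by
    intro a r
    have h := hmul 1 a (oneRepr k H) r
    simpa [oneRepr, hf.one_act, hψa] using h
  constructor
  · intro x
    set rx := CoalgRepr.ofRepr (ℛ k x) with hrx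
    set rL : ∀ i, CoalgRepr k (rx.left i) := fun i => uliftRepr k H _ with hrL
    set rR : ∀ i, CoalgRepr k (rx.right i) := fun i => CoalgRepr.ofRepr (ℛ k _) with hrR
    have coass := Coalgebra.sum_tmul_tmul_eq (R := k) rx.toRepr (fun i => (rL i).toRepr) (fun i => (rR i).toRepr)
    apply_fun (LinearMap.mul' k H ∘ₗ TensorProduct.map φ
      (LinearMap.mul' k H ∘ₗ TensorProduct.map LinearMap.id (antipode (R := k)))) at coass
    simp only [map_sum, LinearMap.comp_apply, TensorProduct.map_tmul,
      LinearMap.mul'_apply, LinearMap.id_coe, id_eq] at coass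
    have hL : ∑ i ∈ rx.index, ∑ j ∈ (rL i).index,
        φ ((rL i).left j) * ((rL i).right j * antipode (R := k) (rx.right i)) =
        counit (R := k) x • (1 : H) := by
      have key : ∀ i ∈ rx.index, ∑ j ∈ (rL i).index,
          φ ((rL i).left j) * ((rL i).right j * antipode (R := k) (rx.right i)) =
          rx.left i * antipode (R := k) (rx.right i) := by
        intro i _
        calc ∑ j ∈ (rL i).index,
            φ ((rL i).left j) * ((rL i).right j * antipode (R := k) (rx.right i))
            = (∑ j ∈ (rL i).index, φ ((rL i).left j) * (rL i).right j) *
              antipode (R := k) (rx.right i) := by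
              rw [Finset.sum_mul]; exact Finset.sum_congr rfl fun j _ => (mul_assoc _ _ _).symm
          _ = rx.left i * antipode (R := k) (rx.right i) := by rw [← hB _ (rL i)]
      rw [Finset.sum_congr rfl key, HopfAlgebra.sum_mul_antipode_eq_smul rx.toRepr]
    have hR : ∑ i ∈ rx.index, ∑ j ∈ (rR i).index,
        φ (rx.left i) * ((rR i).left j * antipode (R := k) ((rR i).right j)) =
        f (x ⊗ₜ 1) := by
      have key : ∀ i ∈ rx.index, ∑ j ∈ (rR i).index,
          φ (rx.left i) * ((rR i).left j * antipode (R := k) ((rR i).right j)) =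
          counit (R := k) (rx.right i) • φ (rx.left i) := by
        intro i _
        rw [← Finset.mul_sum, HopfAlgebra.sum_mul_antipode_eq_smul (rR i).toRepr]
        rw [mul_smul_comm, mul_one]
      rw [Finset.sum_congr rfl key]
      have hx := sum_counit_smul_left k H rx
      calc ∑ i ∈ rx.index, counit (R := k) (rx.right i) • φ (rx.left i)
          = φ (∑ i ∈ rx.index, counit (R := k) (rx.right i) • rx.left i) := by
            rw [map_sum]; exact Finset.sum_congr rfl fun i _ => (map_smul φ _ _).symm
        _ = f (x ⊗ₜ 1) := by rw [hx, hφa]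
    rw [hL, hR] at coass
    exact coass.symm
  · intro y
    set ry := CoalgRepr.ofRepr (ℛ k y) with hry
    set rL : ∀ i, CoalgRepr k (ry.left i) := fun i => CoalgRepr.ofRepr (ℛ k _) with hrL
    set rR : ∀ i, CoalgRepr k (ry.right i) := fun i => uliftRepr k H _ with hrR
    have coass := Coalgebra.sum_tmul_tmul_eq (R := k) ry.toRepr (fun i => (rL i).toRepr) (fun i => (rR i).toRepr)
    apply_fun (LinearMap.mul' k H ∘ₗ TensorProduct.map (antipode (R := k))
      (LinearMap.mul' k H ∘ₗ TensorProduct.map LinearMap.id ψ)) at coass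
    simp only [map_sum, LinearMap.comp_apply, TensorProduct.map_tmul,
      LinearMap.mul'_apply, LinearMap.id_coe, id_eq] at coass
    have hL : ∑ i ∈ ry.index, ∑ j ∈ (rL i).index,
        antipode (R := k) ((rL i).left j) * ((rL i).right j * ψ (ry.right i)) =
        g ((1 : H) ⊗ₜ y) := by
      have key : ∀ i ∈ ry.index, ∑ j ∈ (rL i).index,
          antipode (R := k) ((rL i).left j) * ((rL i).right j * ψ (ry.right i)) =
          counit (R := k) (ry.left i) • ψ (ry.right i) := by
        intro i _
        calc ∑ j ∈ (rL i).index,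
            antipode (R := k) ((rL i).left j) * ((rL i).right j * ψ (ry.right i))
            = (∑ j ∈ (rL i).index, antipode (R := k) ((rL i).left j) * (rL i).right j) *
              ψ (ry.right i) := by
              rw [Finset.sum_mul]; exact Finset.sum_congr rfl fun j _ => (mul_assoc _ _ _).symm
          _ = counit (R := k) (ry.left i) • ψ (ry.right i) := by
              rw [HopfAlgebra.sum_antipode_mul_eq_smul (rL i).toRepr, smul_mul_assoc, one_mul]
      rw [Finset.sum_congr rfl key]
      have hy := sum_counit_smul_right k H ry
      calc ∑ i ∈ ry.index, counit (R := k) (ry.left i) • ψ (ry.right i)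
          = ψ (∑ i ∈ ry.index, counit (R := k) (ry.left i) • ry.right i) := by
            rw [map_sum]; exact Finset.sum_congr rfl fun i _ => (map_smul ψ _ _).symm
        _ = g ((1 : H) ⊗ₜ y) := by rw [hy, hψa]
    have hR : ∑ i ∈ ry.index, ∑ j ∈ (rR i).index,
        antipode (R := k) (ry.left i) * ((rR i).left j * ψ ((rR i).right j)) =
        counit (R := k) y • (1 : H) := by
      have key : ∀ i ∈ ry.index, ∑ j ∈ (rR i).index,
          antipode (R := k) (ry.left i) * ((rR i).left j * ψ ((rR i).right j)) =
          antipode (R := k) (ry.left i) * ry.right i := by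
        intro i _
        rw [← Finset.mul_sum, ← hB' _ (rR i)]
      rw [Finset.sum_congr rfl key, HopfAlgebra.sum_antipode_mul_eq_smul ry.toRepr]
    rw [hL, hR] at coass
    exact coass

end
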